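/- Let a, d ≥ 1 and n ≥ d + 2a. Then q_d^{(a)}(n) ≥ q_{⌈d/a⌉}^{(1)}(⌈n/a⌉). -/

import Mathlib

/-- Number of partitions of `n` all of whose parts satisfy `P`. -/
noncomputable def partCount (n : ℕ) (P : ℕ → Prop) : ℕ :=
  Nat.card {p : n.Partition // ∀ i ∈ p.parts, P i}

/-- `ρ(R; n)`: number of partitions of `n` with all parts in the set `R`. -/
noncomputable def rho (R : Set ℕ) (n : ℕ) : ℕ := partCount n (· ∈ R)

/-- `q_d^{(a)}(n)`: partitions of `n` into parts ≥ `a`, distinct, with pairwise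
differences at least `d`. -/
noncomputable def qpart (d a n : ℕ) : ℕ :=
  Nat.card {p : n.Partition //
    (∀ i ∈ p.parts, a ≤ i) ∧
    (∀ i : ℕ, p.parts.count i ≤ 1) ∧
    (∀ i ∈ p.parts, ∀ j ∈ p.parts, i ≠ j → d ≤ i - j ∨ d ≤ j - i)}

/-- `i ≡ ±b (mod d+3)`. -/
noncomputable def congMod (d b i : ℕ) : Prop :=
  i % (d + 3) = b % (d + 3) ∨ (i + b) % (d + 3) = 0

/-- `Q_d^{(b)}(n)`: partitions of `n` into parts ≡ ±b (mod d+3). -/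
noncomputable def Qfull (d b n : ℕ) : ℕ := partCount n (fun i => congMod d b i)

/-- `Q_d^{(b,-)}(n)`: as `Qfull`, excluding the part `d+3-b`. -/
noncomputable def Qdash (d b n : ℕ) : ℕ :=
  partCount n (fun i => congMod d b i ∧ i ≠ d + 3 - b)

/-- `Q_d^{(b,-,-)}(n)`: as `Qfull`, excluding the parts `b` and `d+3-b`. -/
noncomputable def Qddash (d b n : ℕ) : ℕ :=
  partCount n (fun i => congMod d b i ∧ i ≠ b ∧ i ≠ d + 3 - b)

namespace Stmt2Aux


def Tn : ℕ → ℕ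
  | 0 => 0
  | k+1 => Tn k + k

def gmap (a e : ℕ) : List ℕ → List ℕ
  | [] => []
  | x :: xs => (x + (a-1) + xs.length * e) :: gmap a e xs

def addHead (c : ℕ) : List ℕ → List ℕ
  | [] => []
  | x :: xs => (x + c) :: xs

def stair (a d : ℕ) : ℕ → List ℕ
  | 0 => []
  | t+1 => (a + t*d) :: stair a d t

def badlist (a d N t : ℕ) : List ℕ :=
  (a + (t+1)*d + (N - N/2)) :: (a + t*d + N/2) :: stair a d t

@[simp] lemma length_gmap (a e : ℕ) : ∀ L : List ℕ, (gmap a e L).length = L.length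
  | [] => rfl
  | x :: xs => by simp [gmap, length_gmap a e xs]

lemma sum_gmap (a e : ℕ) : ∀ L : List ℕ,
    (gmap a e L).sum = L.sum + L.length * (a-1) + e * Tn L.length
  | [] => by simp [gmap, Tn]
  | x :: xs => by
    simp only [gmap, List.sum_cons, sum_gmap a e xs, List.length_cons, Tn]
    ring

lemma mem_gmap_ge (a e : ℕ) (ha : 1 ≤ a) : ∀ L : List ℕ, (∀ x ∈ L, 1 ≤ x) →
    ∀ y ∈ gmap a e L, a ≤ y
  | [], _, y, hy => by simp [gmap] at hy
  | x :: xs, hL, y, hy => by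
    rcases List.mem_cons.mp hy with hy | hy
    · subst hy
      have : 1 ≤ x := hL x (by simp)
      omega
    · exact mem_gmap_ge a e ha xs (fun z hz => hL z (by simp [hz])) y hy

lemma chain_gmap (a e q d : ℕ) (he : q + e = d) : ∀ L : List ℕ,
    List.Chain' (fun x y => y + q ≤ x) L →
    List.Chain' (fun x y => y + d ≤ x) (gmap a e L)
  | [], _ => by simp [gmap, List.Chain', List.isChain_nil]
  | [x], _ => by simp [gmap, List.Chain', List.isChain_singleton]
  | x :: y :: xs, h => by
    rw [List.Chain', List.isChain_cons_cons] at h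
    have ih := chain_gmap a e q d he (y :: xs) h.2
    simp only [gmap, List.Chain', List.isChain_cons_cons, List.length_cons] at *
    refine ⟨?_, ih⟩
    have := h.1
    nlinarith [h.1]

lemma gmap_inj (a e : ℕ) : ∀ L L' : List ℕ, gmap a e L = gmap a e L' → L = L'
  | [], [], _ => rfl
  | [], x :: xs, h => by simp [gmap] at h
  | x :: xs, [], h => by simp [gmap] at h
  | x :: xs, x' :: xs', h => by
    simp only [gmap, List.cons.injEq] at h
    have hlen : xs.length = xs'.length := by
      have := congrArg List.length h.2
      simpa using this
    have : xs = xs' := gmap_inj a e xs xs' h.2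
    subst this
    have : x = x' := by have := h.1; omega
    simp [this]

@[simp] lemma length_stair (a d : ℕ) : ∀ t, (stair a d t).length = t
  | 0 => rfl
  | t+1 => by simp [stair, length_stair a d t]

lemma sum_stair (a d : ℕ) : ∀ t, (stair a d t).sum = t * a + d * Tn t
  | 0 => by simp [stair, Tn]
  | t+1 => by simp only [stair, List.sum_cons, sum_stair a d t, Tn]; ring

lemma mem_stair_ge (a d : ℕ) : ∀ t, ∀ y ∈ stair a d t, a ≤ y
  | 0, y, hy => by simp [stair] at hy
  | t+1, y, hy => by
    rcases List.mem_cons.mp hy with hy | hy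
    · omega
    · exact mem_stair_ge a d t y hy

lemma chain_stair (a d : ℕ) : ∀ t, List.Chain' (fun x y => y + d ≤ x) (stair a d t)
  | 0 => by simp [stair, List.Chain', List.isChain_nil]
  | 1 => by simp [stair, List.Chain', List.isChain_singleton]
  | t+2 => by
    have ih := chain_stair a d (t+1)
    simp only [stair, List.Chain', List.isChain_cons_cons] at *
    exact ⟨by nlinarith, ih⟩


lemma stair_bound (q : ℕ) : ∀ L : List ℕ, List.Chain' (fun x y => y + q ≤ x) L →
    (∀ x ∈ L, 1 ≤ x) →
    (L.length + q * Tn L.length ≤ L.sum) ∧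
    (∀ h ∈ L.head?, 1 + (L.length - 1) * q ≤ h) ∧
    (L.sum = L.length + q * Tn L.length → L = stair 1 q L.length)
  | [] => by
    intro _ _
    refine ⟨by simp [Tn], by simp, fun _ => by simp [stair]⟩
  | x :: xs => by
    intro hc h1
    rw [List.Chain', List.isChain_cons] at hc
    obtain ⟨hsum, hhead, heq⟩ :=
      stair_bound q xs hc.2 (fun z hz => h1 z (List.mem_cons_of_mem _ hz))
    have hx : 1 + xs.length * q ≤ x := by
      cases xs with
      | nil => simpa using h1 x (by simp)
      | cons y ys =>
        have hy := hhead y (by simp)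
        have hxy := hc.1 y (by simp)
        simp only [List.length_cons, Nat.add_sub_cancel] at hy
        calc 1 + (ys.length + 1) * q = (1 + ys.length * q) + q := by ring
        _ ≤ y + q := by omega
        _ ≤ x := hxy
    have hTn : Tn (xs.length + 1) = Tn xs.length + xs.length := rfl
    have hq1 : q * (Tn xs.length + xs.length) = q * Tn xs.length + xs.length * q := by ring
    refine ⟨?_, ?_, ?_⟩
    · simp only [List.length_cons, List.sum_cons, hTn, hq1]
      omega
    · intro h hh
      simp only [List.head?_cons, Option.mem_some_iff] at hh
      subst hh
      simpa using hx
    · intro hEq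
      simp only [List.length_cons, List.sum_cons, hTn, hq1] at hEq
      have hxeq : x = 1 + xs.length * q := by omega
      have hxs : xs.sum = xs.length + q * Tn xs.length := by omega
      have := heq hxs
      show _ = stair 1 q (xs.length + 1)
      rw [stair]
      rw [← this, hxeq]

@[simp] lemma length_badlist (a d N t : ℕ) : (badlist a d N t).length = t + 2 := by
  simp [badlist]

lemma sum_badlist (a d N t : ℕ) : (badlist a d N t).sum = (t+2)*a + d * Tn (t+2) + N := by
  simp only [badlist, List.sum_cons, sum_stair]
  have hTn : Tn (t+2) = Tn t + t + (t+1) := rfl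
  rw [hTn]
  obtain ⟨j, hj⟩ : ∃ j, N / 2 = j := ⟨_, rfl⟩
  obtain ⟨k, hk⟩ : ∃ k, N - N / 2 = k := ⟨_, rfl⟩
  have hN : N = k + j := by omega
  rw [hk, hj, hN]
  ring

lemma chain_badlist (a d N t : ℕ) :
    List.Chain' (fun x y => y + d ≤ x) (badlist a d N t) := by
  unfold badlist
  rw [List.Chain', List.isChain_cons_cons]
  constructor
  · have h1 : (t+1)*d = t*d + d := by ring
    rw [h1]
    obtain ⟨w, hw⟩ : ∃ w, t * d = w := ⟨_, rfl⟩
    rw [hw]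
    omega
  · rw [List.isChain_cons]
    refine ⟨?_, chain_stair a d t⟩
    intro y hy
    cases t with
    | zero => simp [stair] at hy
    | succ s =>
      simp only [stair, List.head?_cons, Option.mem_some_iff] at hy
      subst hy
      have h1 : (s+1)*d = s*d + d := by ring
      rw [h1]
      omega

lemma mem_badlist_ge (a d N t : ℕ) : ∀ y ∈ badlist a d N t, a ≤ y := by
  intro y hy
  unfold badlist at hy
  rcases List.mem_cons.mp hy with h | h
  · omega
  rcases List.mem_cons.mp h with h | h
  · omega
  · exact mem_stair_ge a d t y h

lemma Tn_zero : Tn 0 = 0 := rfl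
lemma Tn_one : Tn 1 = 0 := rfl
lemma Tn_two : Tn 2 = 1 := rfl
lemma Tn_ge3 : ∀ t, 3 ≤ Tn (t+3)
  | 0 => by decide
  | t+1 => by
    have := Tn_ge3 t
    show 3 ≤ Tn (t+3) + (t+3)
    omega

lemma bad_arith (A d q e n m k : ℕ)
    (hd : 1 ≤ d) (hn : d + 2*A + 2 ≤ n) (hq1 : 1 ≤ q) (he : q + e = d)
    (hdq : d ≤ (A+1)*q) (hqa : (A+1)*q ≤ d + A)
    (hnm : n ≤ (A+1)*m) (hma : (A+1)*m ≤ n + A)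
    (hm3 : 3 ≤ m) (hmn : m ≤ n)
    (hbound : k + q * Tn k ≤ m)
    (hbad : n + 1 ≤ m + (A*k + e * Tn k)) :
    3 ≤ k ∧ m = k + q * Tn k ∧ 1 ≤ e ∧ 1 ≤ A ∧
    (A+1)*(k-1) + d * Tn (k-1) + d + 2 ≤ n ∧
    m + (A*(k-1) + e * Tn (k-1)) + 2 ≤ n := by
  have P2 : (A+1)*m = A*m + m := by ring
  have P3 : d * Tn k = e * Tn k + q * Tn k := by rw [← he]; ring
  have P4 : (A+1)*q*(Tn k) = A*(q*Tn k) + q*Tn k := by ring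
  have mono2 : d*(Tn k) ≤ (A+1)*q*(Tn k) := Nat.mul_le_mul_right (Tn k) hdq
  have i1 : A*m + 1 ≤ A*k + e*(Tn k) + A := by omega
  have i3 : e*(Tn k) ≤ A*(q*(Tn k)) := by omega
  have hM0 : m = k + q*(Tn k) := by
    rcases Nat.lt_or_ge m (k + q*(Tn k) + 1) with h | h
    · omega
    · exfalso
      have mono3 : A*(k + q*(Tn k) + 1) ≤ A*m := Nat.mul_le_mul_left A h
      have P5 : A*(k + q*(Tn k) + 1) = A*k + A*(q*(Tn k)) + A := by ring
      omega
  have hAm : A*m = A*k + A*(q*(Tn k)) := by rw [hM0]; ring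
  have hA : 1 ≤ A := by omega
  have hk3 : 3 ≤ k := by
    rcases Nat.lt_or_ge k 3 with h | h
    · exfalso
      interval_cases k
      · rw [Tn_zero] at hM0; simp at hM0; omega
      · rw [Tn_one] at hM0; simp at hM0; omega
      · rw [Tn_two] at hM0 hbad
        simp only [Nat.mul_one] at hM0 hbad
        omega
    · exact h
  obtain ⟨t, rfl⟩ : ∃ t, k = t + 3 := ⟨k - 3, by omega⟩
  have hK3 : 3 ≤ Tn (t+3) := Tn_ge3 t
  have he1 : 1 ≤ e := by
    rcases Nat.eq_zero_or_pos e with h | h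
    · exfalso
      subst h
      have mono5 : A*1*3 ≤ A*q*(Tn (t+3)) :=
        Nat.mul_le_mul (Nat.mul_le_mul_left A hq1) hK3
      have P6 : A*1*3 = 3*A := by ring
      have P7 : A*q*(Tn (t+3)) = A*(q*(Tn (t+3))) := by ring
      omega
    · exact h
  have hsub : t + 3 - 1 = t + 2 := rfl
  have hTrel : Tn (t+3) = Tn (t+2) + (t+2) := rfl
  refine ⟨by omega, hM0, he1, hA, ?_, ?_⟩
  · rw [hsub]
    have hAm1 : (A+1)*m = (A+1)*(t+3) + (A+1)*q*(Tn (t+3)) := by rw [hM0]; ring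
    have P9 : d*(Tn (t+3)) = d*(Tn (t+2)) + d*t + 2*d := by rw [hTrel]; ring
    have P10 : (A+1)*(t+3) = (A+1)*(t+2) + (A+1) := by ring
    omega
  · rw [hsub]
    have hAm2 : (A+1)*m = (A+1)*(t+3) + A*(q*(Tn (t+3))) + q*(Tn (t+3)) := by rw [hM0]; ring
    have P12 : e*(Tn (t+3)) = e*(Tn (t+2)) + e*t + 2*e := by rw [hTrel]; ring
    have P14 : (A+1)*(t+3) = A*(t+2) + A + (t+3) := by ring
    omega

def Fm (A d e n m : ℕ) (L : List ℕ) : List ℕ :=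
  if m + (A * L.length + e * Tn L.length) ≤ n then
    addHead (n - (m + (A * L.length + e * Tn L.length))) (gmap (A+1) e L)
  else badlist (A+1) d (n - ((A+1)*(L.length - 1) + d * Tn (L.length - 1))) (L.length - 3)


lemma length_addHead (c : ℕ) : ∀ M : List ℕ, (addHead c M).length = M.length
  | [] => rfl
  | x :: xs => rfl

lemma chain_addHead (c d : ℕ) : ∀ M : List ℕ, List.Chain' (fun x y => y + d ≤ x) M →
    List.Chain' (fun x y => y + d ≤ x) (addHead c M)
  | [], _ => by simp [addHead, List.Chain', List.isChain_nil]
  | x :: xs, h => by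
    rw [List.Chain', List.isChain_cons] at h
    show List.Chain' _ ((x + c) :: xs)
    rw [List.Chain', List.isChain_cons]
    exact ⟨fun z hz => by have := h.1 z hz; omega, h.2⟩

lemma mem_addHead (c : ℕ) : ∀ M : List ℕ, ∀ y ∈ addHead c M, ∃ z ∈ M, z ≤ y
  | x :: xs, y, hy => by
    rcases List.mem_cons.mp hy with h | h
    · exact ⟨x, by simp, by omega⟩
    · exact ⟨y, by simp [h], le_refl y⟩

lemma sum_addHead (c : ℕ) (x : ℕ) (xs : List ℕ) :
    (addHead c (x :: xs)).sum = (x :: xs).sum + c := by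
  simp [addHead]; ring

section Main
variable (A d q e n m : ℕ)
variable (hd : 1 ≤ d) (hn : d + 2*A + 2 ≤ n) (hq1 : 1 ≤ q) (he : q + e = d)
  (hdq : d ≤ (A+1)*q) (hqa : (A+1)*q ≤ d + A)
  (hnm : n ≤ (A+1)*m) (hma : (A+1)*m ≤ n + A)
  (hm3 : 3 ≤ m) (hmn : m ≤ n)

include hd hn hq1 he hdq hqa hnm hma hm3 hmn

lemma Ftarget (L : List ℕ)
    (hc : List.Chain' (fun x y => y + q ≤ x) L) (h1 : ∀ x ∈ L, 1 ≤ x)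
    (hs : L.sum = m) :
    List.Chain' (fun x y => y + d ≤ x) (Fm A d e n m L) ∧
    (∀ x ∈ Fm A d e n m L, A + 1 ≤ x) ∧ (Fm A d e n m L).sum = n := by
  by_cases hgood : m + (A * L.length + e * Tn L.length) ≤ n
  · rw [Fm, if_pos hgood]
    obtain ⟨x, xs, rfl⟩ : ∃ x xs, L = x :: xs := by
      cases L with
      | nil => simp at hs; omega
      | cons x xs => exact ⟨x, xs, rfl⟩
    refine ⟨chain_addHead _ _ _ (chain_gmap (A+1) e q d he _ hc), ?_, ?_⟩
    · intro y hy
      obtain ⟨z, hz, hzy⟩ := mem_addHead _ _ y hy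
      have := mem_gmap_ge (A+1) e (by omega) _ h1 z hz
      omega
    · have hg1 : gmap (A+1) e (x :: xs) = (x + (A+1-1) + xs.length * e) :: gmap (A+1) e xs := rfl
      rw [hg1, sum_addHead, ← hg1, sum_gmap, hs]
      simp only [Nat.add_sub_cancel, List.length_cons] at *
      have hcomm : (xs.length + 1) * A = A * (xs.length + 1) := Nat.mul_comm _ _
      omega
  · rw [Fm, if_neg hgood]
    have hsb := (stair_bound q L hc h1).1
    rw [hs] at hsb
    have hbad' : n + 1 ≤ m + (A * L.length + e * Tn L.length) := by omega
    obtain ⟨hk3, hM0, he1, hA, hN, hΔ⟩ := bad_arith A d q e n m L.length hd hn hq1 he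
      hdq hqa hnm hma hm3 hmn hsb hbad'
    obtain ⟨t, hT⟩ : ∃ t, L.length = t + 3 := ⟨L.length - 3, by omega⟩
    rw [hT] at hN ⊢
    have e1 : t + 3 - 1 = t + 2 := rfl
    have e2 : t + 3 - 3 = t := rfl
    rw [e1] at hN ⊢
    rw [e2]
    refine ⟨chain_badlist _ _ _ _, mem_badlist_ge _ _ _ _, ?_⟩
    rw [sum_badlist]
    have hcomm : (t+2) * (A+1) = (A+1) * (t+2) := Nat.mul_comm _ _
    omega

lemma good_bad_absurd (L L' : List ℕ)
    (hc : List.Chain' (fun x y => y + q ≤ x) L) (h1 : ∀ x ∈ L, 1 ≤ x) (hs : L.sum = m)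
    (hc' : List.Chain' (fun x y => y + q ≤ x) L') (h1' : ∀ x ∈ L', 1 ≤ x) (hs' : L'.sum = m)
    (hgood : m + (A * L.length + e * Tn L.length) ≤ n)
    (hbad : ¬ (m + (A * L'.length + e * Tn L'.length) ≤ n))
    (hEq : Fm A d e n m L = Fm A d e n m L') : False := by
  have hsb := (stair_bound q L' hc' h1').1
  rw [hs'] at hsb
  obtain ⟨hk3, hM0, he1, hA, hN, hΔ⟩ := bad_arith A d q e n m L'.length hd hn hq1 he
    hdq hqa hnm hma hm3 hmn hsb (by omega)
  obtain ⟨t, hT⟩ : ∃ t, L'.length = t + 3 := ⟨L'.length - 3, by omega⟩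
  rw [hT] at hN hΔ
  have e1 : t + 3 - 1 = t + 2 := rfl
  rw [e1] at hN hΔ
  -- lengths
  have hlen : L.length = t + 2 := by
    have h2 := congrArg List.length hEq
    rw [Fm, if_pos hgood, Fm, if_neg hbad, length_addHead, length_gmap, hT] at h2
    simpa using h2
  obtain ⟨x1, x2, rest, rfl⟩ : ∃ x1 x2 rest, L = x1 :: x2 :: rest := by
    cases L with
    | nil => simp at hlen
    | cons x1 L1 =>
      cases L1 with
      | nil => simp at hlen
      | cons x2 rest => exact ⟨x1, x2, rest, rfl⟩
  have hrest : rest.length = t := by simpa using hlen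
  rw [Fm, if_pos hgood, Fm, if_neg hbad, hT] at hEq
  rw [e1, show t + 3 - 3 = t from rfl] at hEq
  rw [show gmap (A+1) e (x1 :: x2 :: rest) =
      (x1 + (A+1-1) + (x2 :: rest).length * e) ::
      (x2 + (A+1-1) + rest.length * e) :: gmap (A+1) e rest from rfl] at hEq
  rw [show ∀ c y ys, addHead c (y :: ys) = (y + c) :: ys from fun _ _ _ => rfl] at hEq
  rw [badlist] at hEq
  simp only [List.cons.injEq] at hEq
  obtain ⟨E1, E2, _⟩ := hEq
  -- numeric contradiction
  have hx12 : x2 + q ≤ x1 := (List.isChain_cons_cons.mp hc).1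
  simp only [Nat.add_sub_cancel, List.length_cons, hrest,
    show t + 1 + 1 = t + 2 from rfl] at E1 E2
  -- E1 : x1 + A + (t+1)*e + Δ = (A+1) + (t+1)*d + (N - N/2)
  -- E2 : x2 + A + t*e = (A+1) + t*d + N/2
  have P1 : (t+1)*e = t*e + e := by ring
  have P2 : (t+1)*d = t*d + d := by ring
  -- Tn (t+2) consistency: goal uses Tn (rest.length + 1 + 1)
  omega

lemma Finj (L L' : List ℕ)
    (hc : List.Chain' (fun x y => y + q ≤ x) L) (h1 : ∀ x ∈ L, 1 ≤ x) (hs : L.sum = m)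
    (hc' : List.Chain' (fun x y => y + q ≤ x) L') (h1' : ∀ x ∈ L', 1 ≤ x) (hs' : L'.sum = m)
    (hEq : Fm A d e n m L = Fm A d e n m L') : L = L' := by
  by_cases hg : m + (A * L.length + e * Tn L.length) ≤ n <;>
    by_cases hg' : m + (A * L'.length + e * Tn L'.length) ≤ n
  · -- good good
    have hlen : L.length = L'.length := by
      have h2 := congrArg List.length hEq
      rw [Fm, if_pos hg, Fm, if_pos hg', length_addHead, length_gmap,
        length_addHead, length_gmap] at h2
      exact h2
    obtain ⟨x, xs, rfl⟩ : ∃ x xs, L = x :: xs := by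
      cases L with
      | nil => simp at hs; omega
      | cons x xs => exact ⟨x, xs, rfl⟩
    obtain ⟨x', xs', rfl⟩ : ∃ x' xs', L' = x' :: xs' := by
      cases L' with
      | nil => simp at hs'; omega
      | cons x' xs' => exact ⟨x', xs', rfl⟩
    rw [Fm, if_pos hg, Fm, if_pos hg'] at hEq
    rw [show gmap (A+1) e (x :: xs) = (x + (A+1-1) + xs.length * e) :: gmap (A+1) e xs
      from rfl] at hEq
    rw [show gmap (A+1) e (x' :: xs') = (x' + (A+1-1) + xs'.length * e) :: gmap (A+1) e xs'
      from rfl] at hEq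
    rw [show ∀ c y ys, addHead c (y :: ys) = (y + c) :: ys from fun _ _ _ => rfl,
      show ∀ c y ys, addHead c (y :: ys) = (y + c) :: ys from fun _ _ _ => rfl] at hEq
    simp only [List.cons.injEq] at hEq
    obtain ⟨E1, E2⟩ := hEq
    have hxs : xs = xs' := gmap_inj (A+1) e xs xs' E2
    subst hxs
    have hlen2 : xs.length = xs.length := rfl
    rw [show (x :: xs).length = (x' :: xs).length from by simpa using hlen] at E1
    have : x = x' := by
      simp only [List.length_cons] at E1 hlen
      omega
    rw [this]
  · exact absurd (good_bad_absurd A d q e n m hd hn hq1 he hdq hqa hnm hma hm3 hmn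
      L L' hc h1 hs hc' h1' hs' hg hg' hEq) (fun h => h)
  · exact absurd (good_bad_absurd A d q e n m hd hn hq1 he hdq hqa hnm hma hm3 hmn
      L' L hc' h1' hs' hc h1 hs hg' hg hEq.symm) (fun h => h)
  · -- bad bad
    have hsb := (stair_bound q L hc h1)
    have hsb' := (stair_bound q L' hc' h1')
    obtain ⟨_, hM0, _, _, _, _⟩ := bad_arith A d q e n m L.length hd hn hq1 he
      hdq hqa hnm hma hm3 hmn (hs ▸ hsb.1) (by omega)
    obtain ⟨_, hM0', _, _, _, _⟩ := bad_arith A d q e n m L'.length hd hn hq1 he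
      hdq hqa hnm hma hm3 hmn (hs' ▸ hsb'.1) (by omega)
    have hL : L = stair 1 q L.length := hsb.2.2 (by omega)
    have hL' : L' = stair 1 q L'.length := hsb'.2.2 (by omega)
    have hlen : L.length = L'.length := by
      have h2 := congrArg List.length hEq
      rw [Fm, if_neg hg, Fm, if_neg hg', length_badlist, length_badlist] at h2
      omega
    rw [hL, hL', hlen]
end Main

/-- canonical decreasing list of parts -/

def toL (m : ℕ) (p : Nat.Partition m) : List ℕ := (Multiset.sort p.parts (· ≤ ·)).reverse

lemma toL_coe (m : ℕ) (p : Nat.Partition m) : (↑(toL m p) : Multiset ℕ) = p.parts := by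
  rw [toL]
  rw [show ((p.parts.sort (· ≤ ·)).reverse : Multiset ℕ) = ↑(p.parts.sort (· ≤ ·)) from
    Multiset.coe_eq_coe.mpr (List.reverse_perm _)]
  exact Multiset.sort_eq _ _

lemma toL_sum (m : ℕ) (p : Nat.Partition m) : (toL m p).sum = m := by
  have := congrArg Multiset.sum (toL_coe m p)
  rw [Multiset.sum_coe] at this
  rw [this, p.parts_sum]

lemma toL_mem (m : ℕ) (p : Nat.Partition m) (x : ℕ) : x ∈ toL m p ↔ x ∈ p.parts := by
  rw [← Multiset.mem_coe, toL_coe]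

lemma toL_pairwise (m q : ℕ) (p : Nat.Partition m)
    (hnd : ∀ i : ℕ, p.parts.count i ≤ 1)
    (hgap : ∀ i ∈ p.parts, ∀ j ∈ p.parts, i ≠ j → q ≤ i - j ∨ q ≤ j - i) :
    (toL m p).Pairwise (fun x y => y + q ≤ x) := by
  rw [toL, List.pairwise_reverse]
  have hsorted : (p.parts.sort (· ≤ ·)).Pairwise (· ≤ ·) := Multiset.pairwise_sort _ _
  have hnodup : (p.parts.sort (· ≤ ·)).Pairwise (· ≠ ·) := by
    have : p.parts.Nodup := Multiset.nodup_iff_count_le_one.mpr hnd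
    exact (Multiset.coe_nodup.mp (by rw [Multiset.sort_eq]; exact this))
  refine (hsorted.and hnodup).imp_of_mem ?_
  intro x y hx hy hxy
  have hgxy := hgap x ((Multiset.mem_sort _).mp hx) y ((Multiset.mem_sort _).mp hy) hxy.2
  have h1 : x ≤ y := hxy.1
  show x + q ≤ y
  omega

/-- The abstract gluing lemma. -/
lemma glue (q d a m n : ℕ) (hq : 1 ≤ q) (hd : 1 ≤ d) (ha : 1 ≤ a)
    (F : List ℕ → List ℕ)
    (hF : ∀ L : List ℕ, List.Chain' (fun x y => y + q ≤ x) L → (∀ x ∈ L, 1 ≤ x) →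
      L.sum = m →
      List.Chain' (fun x y => y + d ≤ x) (F L) ∧ (∀ x ∈ F L, a ≤ x) ∧ (F L).sum = n)
    (hinj : ∀ L L' : List ℕ,
      (List.Chain' (fun x y => y + q ≤ x) L ∧ (∀ x ∈ L, 1 ≤ x) ∧ L.sum = m) →
      (List.Chain' (fun x y => y + q ≤ x) L' ∧ (∀ x ∈ L', 1 ≤ x) ∧ L'.sum = m) →
      F L = F L' → L = L') :
    qpart q 1 m ≤ qpart d a n := by
  classical
  unfold qpart
  haveI : IsTrans ℕ (fun x y => y + d ≤ x) := ⟨fun x y z h1 h2 => by omega⟩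
  haveI : IsTrans ℕ (fun x y => y + q ≤ x) := ⟨fun x y z h1 h2 => by omega⟩
  -- properties of domain elements
  have dom : ∀ (p : Nat.Partition m), (∀ i ∈ p.parts, 1 ≤ i) →
      (∀ i : ℕ, p.parts.count i ≤ 1) →
      (∀ i ∈ p.parts, ∀ j ∈ p.parts, i ≠ j → q ≤ i - j ∨ q ≤ j - i) →
      List.Chain' (fun x y => y + q ≤ x) (toL m p) ∧ (∀ x ∈ toL m p, 1 ≤ x) ∧
        (toL m p).sum = m := by
    intro p h1 h2 h3
    refine ⟨(toL_pairwise m q p h2 h3).isChain, ?_, toL_sum m p⟩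
    intro x hx
    exact h1 x ((toL_mem m p x).mp hx)
  -- the map
  have key : ∀ (p : {p : m.Partition //
      (∀ i ∈ p.parts, 1 ≤ i) ∧ (∀ i : ℕ, p.parts.count i ≤ 1) ∧
      (∀ i ∈ p.parts, ∀ j ∈ p.parts, i ≠ j → q ≤ i - j ∨ q ≤ j - i)}),
      List.Chain' (fun x y => y + d ≤ x) (F (toL m p.1)) ∧
      (∀ x ∈ F (toL m p.1), a ≤ x) ∧ (F (toL m p.1)).sum = n := by
    rintro ⟨p, h1, h2, h3⟩
    obtain ⟨c1, c2, c3⟩ := dom p h1 h2 h3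
    exact hF _ c1 c2 c3
  refine Nat.card_le_card_of_injective (fun p => ⟨⟨(↑(F (toL m p.1)) : Multiset ℕ), ?_, ?_⟩, ?_, ?_, ?_⟩) ?_
  · -- parts_pos
    intro i hi
    have := (key p).2.1 i (Multiset.mem_coe.mp hi)
    omega
  · rw [Multiset.sum_coe]; exact (key p).2.2
  · intro i hi
    exact (key p).2.1 i (Multiset.mem_coe.mp hi)
  · -- nodup
    intro i
    refine Multiset.nodup_iff_count_le_one.mp ?_ i
    refine Multiset.coe_nodup.mpr ?_
    have hpw := List.isChain_iff_pairwise.mp (key p).1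
    exact hpw.imp (fun h => by omega)
  · -- gaps
    have hpw := List.isChain_iff_pairwise.mp (key p).1
    have hpw2 : (F (toL m p.1)).Pairwise (fun i j => d ≤ i - j ∨ d ≤ j - i) :=
      hpw.imp (fun h => Or.inl (by omega))
    have hsym : Symmetric (fun i j : ℕ => d ≤ i - j ∨ d ≤ j - i) := by
      intro x y h; tauto
    intro i hi j hj hij
    haveI : Std.Symm (fun i j : ℕ => d ≤ i - j ∨ d ≤ j - i) := ⟨fun _ _ h => hsym h⟩
    exact hpw2.forall (Multiset.mem_coe.mp hi) (Multiset.mem_coe.mp hj) hij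
  · -- injectivity
    rintro ⟨p, hp⟩ ⟨p', hp'⟩ hEq
    simp only [Subtype.mk.injEq] at hEq
    have hEq2 : (↑(F (toL m p)) : Multiset ℕ) = ↑(F (toL m p')) := congrArg Nat.Partition.parts hEq
    have hperm : List.Perm (F (toL m p)) (F (toL m p')) := Multiset.coe_eq_coe.mp hEq2
    haveI : IsAntisymm ℕ (fun x y : ℕ => y + d ≤ x) := ⟨fun x y h1 h2 => by omega⟩
    have hs1 : (F (toL m p)).Pairwise (fun x y => y + d ≤ x) :=
      List.isChain_iff_pairwise.mp (key ⟨p, hp⟩).1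
    have hs2 : (F (toL m p')).Pairwise (fun x y => y + d ≤ x) :=
      List.isChain_iff_pairwise.mp (key ⟨p', hp'⟩).1
    have hFL : F (toL m p) = F (toL m p') := List.Perm.eq_of_pairwise' hs1 hs2 hperm
    obtain ⟨hp1, hp2, hp3⟩ := hp
    obtain ⟨hp1', hp2', hp3'⟩ := hp'
    have hL : toL m p = toL m p' := hinj _ _ (dom p hp1 hp2 hp3) (dom p' hp1' hp2' hp3') hFL
    have : p.parts = p'.parts := by
      rw [← toL_coe m p, ← toL_coe m p', hL]
    exact Subtype.ext (Nat.Partition.ext this)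

end Stmt2Aux

theorem stmt2 (a d n : ℕ) (ha : 1 ≤ a) (hd : 1 ≤ d) (hn : d + 2 * a ≤ n) :
    qpart ((d + a - 1) / a) 1 ((n + a - 1) / a) ≤ qpart d a n := by
  obtain ⟨A, rfl⟩ : ∃ A, a = A + 1 := ⟨a - 1, by omega⟩
  have h1 : d + (A + 1) - 1 = d + A := by omega
  have h2 : n + (A + 1) - 1 = n + A := by omega
  rw [h1, h2]
  set q := (d + A) / (A + 1) with hqdef
  set m := (n + A) / (A + 1) with hmdef
  have hq : (A + 1) * q + (d + A) % (A + 1) = d + A := by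
    rw [hqdef]; exact Nat.div_add_mod _ _
  have hqlt : (d + A) % (A + 1) < A + 1 := Nat.mod_lt _ (by omega)
  have hm : (A + 1) * m + (n + A) % (A + 1) = n + A := by
    rw [hmdef]; exact Nat.div_add_mod _ _
  have hmlt : (n + A) % (A + 1) < A + 1 := Nat.mod_lt _ (by omega)
  have hdq : d ≤ (A + 1) * q := by omega
  have hqa : (A + 1) * q ≤ d + A := by omega
  have hnm : n ≤ (A + 1) * m := by omega
  have hma : (A + 1) * m ≤ n + A := by omega
  have hq1 : 1 ≤ q := by
    rcases Nat.eq_zero_or_pos q with h | h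
    · rw [h] at hdq; simp at hdq; omega
    · exact h
  have hqd : q ≤ d := by
    have hda : d + A ≤ (A + 1) * d := by
      have h3 : A * 1 ≤ A * d := Nat.mul_le_mul_left A hd
      have hr : (A + 1) * d = A * d + d := by ring
      omega
    have h4 : (A + 1) * q ≤ (A + 1) * d := by omega
    exact Nat.le_of_mul_le_mul_left h4 (by omega)
  have he : q + (d - q) = d := by omega
  have hn' : d + 2 * A + 2 ≤ n := by omega
  have hm3 : 3 ≤ m := by
    by_contra h
    have h5 : m ≤ 2 := by omega
    have h6 : (A + 1) * m ≤ (A + 1) * 2 := Nat.mul_le_mul_left _ h5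
    omega
  have hmn : m ≤ n := by
    by_contra h
    have h3 : n + 1 ≤ m := by omega
    have h7 : (A + 1) * (n + 1) ≤ (A + 1) * m := Nat.mul_le_mul_left _ h3
    have hr : (A + 1) * (n + 1) = A * n + n + A + 1 := by ring
    omega
  exact Stmt2Aux.glue q d (A + 1) m n hq1 hd (by omega) (Stmt2Aux.Fm A d (d - q) n m)
    (fun L hc hm1 hsum =>
      Stmt2Aux.Ftarget A d q (d - q) n m hd hn' hq1 he hdq hqa hnm hma hm3 hmn L hc hm1 hsum)
    (fun L L' hL hL' hEq =>
      Stmt2Aux.Finj A d q (d - q) n m hd hn' hq1 he hdq hqa hnm hma hm3 hmn L L'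
        hL.1 hL.2.1 hL.2.2 hL'.1 hL'.2.1 hL'.2.2 hEq)
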